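/- Let y_1^j be a training string and x_1^n a string over {1,...,D}, and let s ≥ L(y_1^j x_1^n), where L denotes the depth of the concatenated string. Then for every l with 0 ≤ l ≤ n−1 and every k ≥ s, the preadapted predictors satisfy B(x_{l+1}|x_1^l, k) = B(x_{l+1}|x_1^l, s), where counts of substrings whose indices fall outside the available string are taken to be zero. -/

import Mathlib

open Filter MeasureTheory
open scoped Topology

/-- Number of occurrences `c(w|z)` of `w` as a substring of `z`. -/
def cnt {D : ℕ} (w z : List (Fin D)) : ℕ :=
  ((List.range (z.length - w.length + 1)).filter
    (fun i => (z.drop i).take w.length = w)).length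

/-- Count `c(w | z_1^{m-1})` of `w` in the string `z` with its last symbol removed,
with the convention that counting in a block of length `-1` (i.e. when `z` itself is
empty) gives `0`. -/
def cntPred {D : ℕ} (w z : List (Fin D)) : ℕ :=
  if z = [] then 0 else cnt w z.dropLast

/-- The prefix `x_1^n` of the one-sided sequence `x` (0-indexed: `x i = x_{i+1}`). -/
def pref {D : ℕ} (x : ℕ → Fin D) (n : ℕ) : List (Fin D) :=
  (List.range n).map x

/-- Adaptive Markov predictor: the natural-number index corresponds to the Markov
order shifted by one, so `Bpred D xs a (k+1) = B(a | xs, k)` and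
`Bpred D xs a 0 = B(a | xs, -1) = 1/D`, where
`B(x_{n+1}|x_1^n, k) = (c(x_{n+1-k}^{n+1}|x_1^n) + B(x_{n+1}|x_1^n, k-1)) /
(c(x_{n+1-k}^{n}|x_1^{n-1}) + 1)`.  Counts of substrings whose indices fall outside
the string are taken to be zero. -/
noncomputable def Bpred (D : ℕ) (xs : List (Fin D)) (a : Fin D) : ℕ → ℝ
  | 0 => 1 / D
  | k + 1 =>
    if k ≤ xs.length then
      ((cnt (xs.drop (xs.length - k) ++ [a]) xs : ℝ) + Bpred D xs a k) /
      ((cntPred (xs.drop (xs.length - k)) xs : ℝ) + 1)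
    else Bpred D xs a k

/-- Preadapted Markov predictor with training data `y`: the natural-number index
corresponds to the Markov order shifted by one, so `BpredPre D y xs a (k+1) = B(a|xs,k)`
and `BpredPre D y xs a 0 = 1/D`, where
`B(x_{n+1}|x_1^n, k) = (c(x_{n+1-k}^{n+1}|y_1^j x_1^n) + B(x_{n+1}|x_1^n, k-1)) /
(c(x_{n+1-k}^{n}|y_1^j x_1^{n-1}) + 1)`: counts are taken in the concatenated string,
and counts of substrings whose indices fall outside the available string are zero. -/
noncomputable def BpredPre (D : ℕ) (y xs : List (Fin D)) (a : Fin D) : ℕ → ℝ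
  | 0 => 1 / D
  | k + 1 =>
    if k ≤ xs.length then
      ((cnt (xs.drop (xs.length - k) ++ [a]) (y ++ xs) : ℝ) + BpredPre D y xs a k) /
      ((cntPred (xs.drop (xs.length - k)) (y ++ xs) : ℝ) + 1)
    else BpredPre D y xs a k

/-- Partial preadapted switch distribution `P(x_1^n, k)` with Markov order `k : ℤ`. -/
noncomputable def PpartPre (D : ℕ) (p : ℕ → ℝ) (y : List (Fin D)) (x : ℕ → Fin D) :
    ℕ → ℤ → ℝ
  | 0, _ => 0
  | 1, k =>
    if k = -1 then p 0 * BpredPre D y [] (x 0) 0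
    else if k = 0 then (1 - p 0) * BpredPre D y [] (x 0) 1
    else 0
  | n + 2, k =>
    if -1 ≤ k ∧ k ≤ (n : ℤ) + 1 then
      (p (n + 1) * PpartPre D p y x (n + 1) k +
        (1 - p (n + 1)) * PpartPre D p y x (n + 1) (k - 1)) *
        BpredPre D y (pref x (n + 1)) (x (n + 1)) (k + 1).toNat
    else 0

/-- The preadapted switch distribution `P(x_1^n) = Σ_{k=-1}^{n-1} P(x_1^n, k)`. -/
noncomputable def swPre (D : ℕ) (p : ℕ → ℝ) (y : List (Fin D)) (x : ℕ → Fin D) (n : ℕ) : ℝ :=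
  ∑ kk ∈ Finset.range (n + 1), PpartPre D p y x n ((kk : ℤ) - 1)

/-- The depth `L(z)`: maximal length of a substring occurring at least twice in `z`
(`0` if there is none). -/
noncomputable def depth {D : ℕ} (z : List (Fin D)) : ℕ :=
  sSup {k | ∃ w : List (Fin D), w.length = k ∧ 2 ≤ cnt w z}

lemma cnt_eq_card {D : ℕ} (w z : List (Fin D)) :
    cnt w z = ((Finset.range (z.length - w.length + 1)).filter
      (fun i => (z.drop i).take w.length = w)).card := rfl

lemma occ_add_le {D : ℕ} {w z : List (Fin D)} {i : ℕ}
    (hw : w ≠ []) (h : (z.drop i).take w.length = w) :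
    i + w.length ≤ z.length := by
  have hlen := congrArg List.length h
  simp only [List.length_take, List.length_drop] at hlen
  have : 0 < w.length := List.length_pos_iff.mpr hw
  omega

lemma occ_prefix {D : ℕ} {w z₁ z₂ : List (Fin D)} {i : ℕ}
    (hw : w ≠ []) (hp : z₁ <+: z₂) (h : (z₁.drop i).take w.length = w) :
    (z₂.drop i).take w.length = w := by
  obtain ⟨t, rfl⟩ := hp
  have hb := occ_add_le hw h
  have h0 : 0 < w.length := List.length_pos_iff.mpr hw
  rw [List.drop_append_of_le_length (by omega),
    List.take_append_of_le_length (by simp [List.length_drop]; omega)]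
  exact h

lemma cnt_le_of_prefix {D : ℕ} {w z₁ z₂ : List (Fin D)}
    (hw : w ≠ []) (hp : z₁ <+: z₂) : cnt w z₁ ≤ cnt w z₂ := by
  rw [cnt_eq_card, cnt_eq_card]
  apply Finset.card_le_card
  intro i hi
  simp only [Finset.mem_filter, Finset.mem_range] at hi ⊢
  obtain ⟨hir, hocc⟩ := hi
  have hb := occ_add_le hw hocc
  have hl := hp.length_le
  exact ⟨by omega, occ_prefix hw hp hocc⟩

lemma cnt_le_bound {D : ℕ} (w z : List (Fin D)) : cnt w z ≤ z.length - w.length + 1 := by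
  rw [cnt_eq_card]
  calc _ ≤ (Finset.range (z.length - w.length + 1)).card := Finset.card_filter_le _ _
  _ = _ := Finset.card_range _

lemma le_depth {D : ℕ} {w Z : List (Fin D)} (h : 2 ≤ cnt w Z) :
    w.length ≤ depth Z := by
  apply le_csSup
  · refine ⟨Z.length, ?_⟩
    rintro k ⟨v, rfl, hv⟩
    have := cnt_le_bound v Z
    omega
  · exact ⟨w, rfl, h⟩

lemma two_le_cnt {D : ℕ} {z w : List (Fin D)} {i : ℕ} (hw : w ≠ [])
    (hocc : (z.drop i).take w.length = w) (hlt : i + w.length < z.length)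
    (hmz : w.length ≤ z.length) (hsuf : z.drop (z.length - w.length) = w) :
    2 ≤ cnt w z := by
  rw [cnt_eq_card]
  refine Finset.one_lt_card.mpr ⟨i, ?_, z.length - w.length, ?_, by omega⟩
  · simp only [Finset.mem_filter, Finset.mem_range]
    exact ⟨by omega, hocc⟩
  · simp only [Finset.mem_filter, Finset.mem_range]
    refine ⟨by omega, ?_⟩
    rw [hsuf]
    exact List.take_length

lemma cnt_suffix_eq_one {D : ℕ} {Z z : List (Fin D)} {m : ℕ}
    (hm : 0 < m) (hmz : m ≤ z.length) (hp : z <+: Z) (hd : depth Z < m)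
    (w : List (Fin D)) (hsuf : z.drop (z.length - m) = w) :
    cnt w z = 1 := by
  have hwl : w.length = m := by
    rw [← hsuf, List.length_drop]; omega
  have hne : w ≠ [] := by
    intro h; rw [h] at hwl; simp at hwl; omega
  have h1 : 1 ≤ cnt w z := by
    rw [cnt_eq_card]
    refine Finset.card_pos.mpr ⟨z.length - m, ?_⟩
    simp only [Finset.mem_filter, Finset.mem_range]
    refine ⟨by omega, ?_⟩
    rw [hsuf, hwl, ← hwl]
    exact List.take_length
  have h2 : cnt w z ≤ 1 := by
    by_contra hcon
    have h2' : 2 ≤ cnt w Z := le_trans (by omega) (cnt_le_of_prefix hne hp)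
    have := le_depth h2'
    omega
  omega

lemma cnt_ext_zero {D : ℕ} {Z z : List (Fin D)} {m : ℕ}
    (hm : 0 < m) (hmz : m ≤ z.length) (hp : z <+: Z) (hd : depth Z < m)
    (w : List (Fin D)) (hsuf : z.drop (z.length - m) = w) (a : Fin D) :
    cnt (w ++ [a]) z = 0 := by
  have hwl : w.length = m := by
    rw [← hsuf, List.length_drop]; omega
  have hne : w ≠ [] := by
    intro h; rw [h] at hwl; simp at hwl; omega
  have hone := cnt_suffix_eq_one hm hmz hp hd w hsuf
  rw [cnt_eq_card, Finset.card_eq_zero, Finset.filter_eq_empty_iff]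
  intro i _ hocc
  have hlen : (w ++ [a]).length = m + 1 := by simp [hwl]
  have hb : i + (m + 1) ≤ z.length := by
    have := occ_add_le (by simp) hocc
    omega
  have hocc' : (z.drop i).take w.length = w := by
    have := congrArg (List.take m) hocc
    rw [List.take_take, List.take_append_of_le_length (by omega)] at this
    rw [hwl]
    rw [min_eq_left (by omega : m ≤ (w ++ [a]).length)] at this
    rw [this, ← hwl, List.take_length]
  have h2 : 2 ≤ cnt w z := by
    refine two_le_cnt hne hocc' (by omega) (by omega) ?_
    rw [hwl]; exact hsuf
  omega

lemma cntPred_zero {D : ℕ} {Z z : List (Fin D)} {m : ℕ}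
    (hm : 0 < m) (hmz : m ≤ z.length) (hp : z <+: Z) (hd : depth Z < m)
    (w : List (Fin D)) (hsuf : z.drop (z.length - m) = w) :
    cntPred w z = 0 := by
  have hwl : w.length = m := by
    rw [← hsuf, List.length_drop]; omega
  have hne : w ≠ [] := by
    intro h; rw [h] at hwl; simp at hwl; omega
  have hzne : z ≠ [] := by
    intro h; rw [h] at hmz; simp at hmz; omega
  have hone := cnt_suffix_eq_one hm hmz hp hd w hsuf
  rw [cntPred, if_neg hzne, cnt_eq_card, Finset.card_eq_zero,
    Finset.filter_eq_empty_iff]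
  intro i _ hocc
  have hdl : z.dropLast.length = z.length - 1 := List.length_dropLast
  have hb : i + w.length ≤ z.dropLast.length := occ_add_le hne hocc
  have hocc' : (z.drop i).take w.length = w :=
    occ_prefix hne (List.dropLast_prefix z) hocc
  have h2 : 2 ≤ cnt w z := by
    refine two_le_cnt hne hocc' (by omega) (by omega) ?_
    rw [hwl]; exact hsuf
  omega

lemma pref_length {D : ℕ} (x : ℕ → Fin D) (l : ℕ) : (pref x l).length = l := by
  simp [pref]

lemma pref_prefix {D : ℕ} (x : ℕ → Fin D) {l n : ℕ} (h : l ≤ n) :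
    pref x l <+: pref x n := by
  have : pref x l = (pref x n).take l := by
    simp [pref, ← List.map_take, List.take_range, min_eq_left h]
  rw [this]
  exact List.take_prefix _ _

lemma step_lemma {D : ℕ} (y : List (Fin D)) {n l : ℕ} (x : ℕ → Fin D) (a : Fin D)
    (hln : l ≤ n) {m : ℕ} (hm : 0 < m) (hd : depth (y ++ pref x n) < m) :
    BpredPre D y (pref x l) a (m + 1) = BpredPre D y (pref x l) a m := by
  by_cases hms : m ≤ (pref x l).length
  · have hlen : (y ++ pref x l).length = y.length + l := by simp [pref_length]
    have hml : m ≤ l := by rwa [pref_length] at hms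
    have hp : (y ++ pref x l) <+: (y ++ pref x n) := by
      obtain ⟨t, ht⟩ := pref_prefix x hln
      exact ⟨t, by rw [List.append_assoc, ht]⟩
    have hmz : m ≤ (y ++ pref x l).length := by omega
    have hsuf : (y ++ pref x l).drop ((y ++ pref x l).length - m)
        = (pref x l).drop ((pref x l).length - m) := by
      rw [hlen, pref_length]
      have : y.length + l - m = y.length + (l - m) := by omega
      rw [this, List.drop_append]
      simp
    have hc1 : cnt ((pref x l).drop ((pref x l).length - m) ++ [a]) (y ++ pref x l) = 0 :=
      cnt_ext_zero hm hmz hp hd _ hsuf a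
    have hc2 : cntPred ((pref x l).drop ((pref x l).length - m)) (y ++ pref x l) = 0 :=
      cntPred_zero hm hmz hp hd _ hsuf
    conv_lhs => rw [BpredPre]
    rw [if_pos hms, hc1, hc2]
    norm_num
  · conv_lhs => rw [BpredPre]
    rw [if_neg hms]

/-- Let `y_1^j` be a training string, `x_1^n` a string over `{1,...,D}`, and
`s ≥ L(y_1^j x_1^n)`, where `L` denotes the depth of the concatenated string. Then for
every `l` with `0 ≤ l ≤ n−1` and every `k ≥ s`, the preadapted predictors satisfy
`B(x_{l+1}|x_1^l, k) = B(x_{l+1}|x_1^l, s)`. -/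
theorem preadapted_predictor_stabilizes_above_depth
    (D : ℕ) (hD : 2 ≤ D) (y : List (Fin D)) (n : ℕ) (x : ℕ → Fin D) (s : ℕ)
    (hs : depth (y ++ pref x n) ≤ s) :
    ∀ l < n, ∀ k : ℕ, s ≤ k →
      BpredPre D y (pref x l) (x l) (k + 1) =
        BpredPre D y (pref x l) (x l) (s + 1) := by
  intro l hl k hk
  induction k, hk using Nat.le_induction with
  | base => rfl
  | succ k hk ih =>
      rw [step_lemma y x (x l) (le_of_lt hl) (by omega) (by omega), ih]
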